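/- arXiv:1808.03638 — 2 statements merged into one kernel-verified Lean document; each statement's English description precedes it below -/
import Mathlib

section
/- For every positive integer n, with S(n) = Σ_{k,N≥1} f(k,N)·g(n−k,N), we have S(n) = p_2(n) − n·p(n) − N_2(n)/2. In particular S(n) ≥ 0. -/
open Finset PowerSeries

noncomputable section

/-- number of partitions of `n` -/
def pp (n : ℕ) : ℕ := Fintype.card (Nat.Partition n)

/-- number of partitions of `n` with exactly `m` parts -/
def pmn (m n : ℕ) : ℕ :=
  ((univ : Finset (Nat.Partition n)).filter fun l => l.parts.card = m).card

/-- `p_2(n) = Σ_m m² p(m,n)` (parts count is at most `n`) -/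
def p2 (n : ℕ) : ℕ := ∑ m ∈ range (n + 1), m ^ 2 * pmn m n

/-- rank = largest part − number of parts -/
def rank {n : ℕ} (l : Nat.Partition n) : ℤ := (l.parts.sup : ℤ) - l.parts.card

/-- number of partitions of `n` with rank `m` -/
def Nrank (m : ℤ) (n : ℕ) : ℕ :=
  ((univ : Finset (Nat.Partition n)).filter fun l => rank l = m).card

/-- second rank moment (rank of a partition of `n` lies in `[-n,n]`) -/
def N2 (n : ℕ) : ℤ := ∑ m ∈ Finset.Icc (-(n : ℤ)) n, m ^ 2 * Nrank m n

/-- Andrews–Garvan crank -/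
def crank {n : ℕ} (l : Nat.Partition n) : ℤ :=
  if l.parts.count 1 = 0 then (l.parts.sup : ℤ)
  else ((l.parts.filter fun a => l.parts.count 1 < a).card : ℤ) - l.parts.count 1

/-- number of partitions of `n` with crank `m`, with the usual convention for `n = 1` -/
def Mcrank (m : ℤ) (n : ℕ) : ℤ :=
  if n = 1 then (if m = 0 then -1 else if m = 1 ∨ m = -1 then 1 else 0)
  else (((univ : Finset (Nat.Partition n)).filter fun l => crank l = m).card : ℤ)

/-- second crank moment -/
def M2 (n : ℕ) : ℤ := ∑ m ∈ Finset.Icc (-(n : ℤ)) n, m ^ 2 * Mcrank m n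

def smallestPart {n : ℕ} (l : Nat.Partition n) : ℕ := sInf {a | a ∈ l.parts}

/-- total number of appearances of the smallest part in all partitions of `n` -/
def spt (n : ℕ) : ℕ := ∑ l : Nat.Partition n, l.parts.count (smallestPart l)

def d (n : ℕ) : ℕ := n.divisors.card
def sigma1 (n : ℕ) : ℕ := ∑ k ∈ n.divisors, k

/-- partitions of `n` into exactly `m` distinct parts -/
def bmn (m n : ℕ) : ℕ :=
  ((univ : Finset (Nat.Partition n)).filter fun l => l.parts.card = m ∧ l.parts.Nodup).card

/-- number of divisors of `m` that are ≤ N -/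
def g (m N : ℕ) : ℕ := (m.divisors.filter fun e => e ≤ N).card

/-- `p(k)` minus the number of partitions of `k` with all parts ≤ N -/
def f (k N : ℕ) : ℕ :=
  pp k - ((univ : Finset (Nat.Partition k)).filter fun l => ∀ a ∈ l.parts, a ≤ N).card

/-- `S(n) = Σ_{k,N≥1} f(k,N) g(n−k,N)`; terms vanish for `k > n` or `N ≥ k` -/
def S (n : ℕ) : ℕ := ∑ k ∈ Icc 1 n, ∑ N ∈ Icc 1 n, f k N * g (n - k) N

/-- `(q;q)_n` -/
def qPoch (n : ℕ) : PowerSeries ℚ := ∏ k ∈ Icc 1 n, (1 - X ^ k)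

/-- `(q;q)_∞`, defined coefficient-wise (coefficients of `q^N` stabilize for `(q;q)_M`, `M ≥ N`) -/
def qInf : PowerSeries ℚ := PowerSeries.mk fun N => coeff N (qPoch N)

/-- `(q^{n+1};q)_∞`, defined coefficient-wise -/
def tailProd (n : ℕ) : PowerSeries ℚ :=
  PowerSeries.mk fun N => coeff N (∏ k ∈ Icc (n + 1) N, (1 - X ^ k))

/-- sum `Σ_{n≥0} a n` of a family of power series with `coeff N (a n) = 0` for `n > N` -/
def seriesSum (a : ℕ → PowerSeries ℚ) : PowerSeries ℚ :=
  PowerSeries.mk fun N => ∑ n ∈ range (N + 1), coeff N (a n)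

/-- double sum `Σ_{n1,n2≥1} a n1 n2`, assuming `coeff N (a n1 n2) = 0` for `n1 + n2 > N` -/
def seriesSum2 (a : ℕ → ℕ → PowerSeries ℚ) : PowerSeries ℚ :=
  PowerSeries.mk fun N => ∑ n1 ∈ Icc 1 N, ∑ n2 ∈ Icc 1 N, coeff N (a n1 n2)

/-- `Σ_{n≥1} q^n/(1−q^n)`, the generating function of `d(n)` -/
def divSum : PowerSeries ℚ := seriesSum fun n => X ^ (n + 1) * (1 - X ^ (n + 1))⁻¹


section Aux

lemma part_le_n {n : ℕ} (l : Nat.Partition n) {x : ℕ} (hx : x ∈ l.parts) : x ≤ n := by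
  rw [← l.parts_sum]
  exact Multiset.le_sum_of_mem hx

lemma sup_le_n {n : ℕ} (l : Nat.Partition n) : l.parts.sup ≤ n :=
  Multiset.sup_le.2 fun x hx => part_le_n l hx

lemma card_le_n {n : ℕ} (l : Nat.Partition n) : l.parts.card ≤ n := by
  conv_rhs => rw [← l.parts_sum]
  simpa using Multiset.card_nsmul_le_sum fun x hx => l.parts_pos hx

lemma parts_zero (l : Nat.Partition 0) : l.parts = 0 := by
  have := l.parts_sum
  rw [Multiset.sum_eq_zero_iff] at this
  by_contra h
  obtain ⟨x, hx⟩ := Multiset.exists_mem_of_ne_zero h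
  exact absurd (this x hx) (l.parts_pos hx).ne'

lemma sup_mem_exists {n : ℕ} (l : Nat.Partition n) {N : ℕ} (h : N < l.parts.sup) :
    ∃ x ∈ l.parts, N < x := by
  by_contra hc
  push_neg at hc
  exact absurd (Multiset.sup_le.2 hc) (not_le.2 h)


lemma key_bij {n k N e t : ℕ} (he : 1 ≤ e) (ht : 1 ≤ t) (heN : e ≤ N)
    (hsum : e * t + k = n) :
    ((univ : Finset (Nat.Partition k)).filter fun μ => N < μ.parts.sup).card =
    ((univ : Finset (Nat.Partition n)).filter fun l =>
      N < l.parts.sup ∧ t ≤ l.parts.count e).card := by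
  set r : Multiset ℕ := Multiset.replicate t e with hr
  have hrsum : r.sum = e * t := by
    rw [hr, Multiset.sum_replicate, smul_eq_mul, mul_comm]
  refine Finset.card_bij'
    (fun μ _ => ⟨μ.parts + r, ?_, ?_⟩)
    (fun l hl => ⟨l.parts - r, ?_, ?_⟩) ?_ ?_ ?_ ?_
  · intro i hi
    rcases Multiset.mem_add.1 hi with h | h
    · exact μ.parts_pos h
    · rw [Multiset.eq_of_mem_replicate h]; exact he
  · rw [Multiset.sum_add, hrsum, μ.parts_sum, add_comm, hsum]
  · intro i hi
    exact l.parts_pos (Multiset.mem_of_le (tsub_le_self) hi)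
  · have hl' := (Finset.mem_filter.1 hl).2
    have hle : r ≤ l.parts := by
      rw [Multiset.le_iff_count]
      intro a
      rw [hr, Multiset.count_replicate]
      split
      · next h => subst h; exact hl'.2
      · exact Nat.zero_le _
    have := congrArg Multiset.sum (tsub_add_cancel_of_le hle)
    rw [Multiset.sum_add, hrsum, l.parts_sum] at this
    omega
  · -- forward maps into filter
    intro μ hμ
    have hμ' := (Finset.mem_filter.1 hμ).2
    refine Finset.mem_filter.2 ⟨Finset.mem_univ _, ?_, ?_⟩
    · obtain ⟨x, hx, hNx⟩ := sup_mem_exists μ hμ'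
      exact lt_of_lt_of_le hNx (Multiset.le_sup (Multiset.mem_add.2 (Or.inl hx)))
    · show t ≤ Multiset.count e (μ.parts + r)
      rw [Multiset.count_add, hr, Multiset.count_replicate, if_pos rfl]
      omega
  · -- backward maps into filter
    intro l hl
    have hl' := (Finset.mem_filter.1 hl).2
    refine Finset.mem_filter.2 ⟨Finset.mem_univ _, ?_⟩
    show N < (l.parts - r).sup
    obtain ⟨x, hx, hNx⟩ := sup_mem_exists l hl'.1
    have hxe : x ≠ e := by omega
    have hxmem : x ∈ l.parts - r := by
      rw [← Multiset.count_pos, Multiset.count_sub, hr, Multiset.count_replicate,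
        if_neg (Ne.symm hxe), Nat.sub_zero, Multiset.count_pos]
      exact hx
    exact lt_of_lt_of_le hNx (Multiset.le_sup hxmem)
  · intro μ hμ
    apply Nat.Partition.ext
    show μ.parts + r - r = μ.parts
    exact add_tsub_cancel_right _ _
  · intro l hl
    have hl' := (Finset.mem_filter.1 hl).2
    have hle : r ≤ l.parts := by
      rw [Multiset.le_iff_count]
      intro a
      rw [hr, Multiset.count_replicate]
      split
      · next h => subst h; exact hl'.2
      · exact Nat.zero_le _
    apply Nat.Partition.ext
    show l.parts - r + r = l.parts
    exact tsub_add_cancel_of_le hle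

lemma multiset_sum_mono {s t : Multiset ℕ} (h : s ≤ t) : s.sum ≤ t.sum := by
  obtain ⟨u, rfl⟩ := Multiset.le_iff_exists_add.1 h
  rw [Multiset.sum_add]
  exact Nat.le_add_right _ _

lemma f_eq (k N : ℕ) :
    f k N = ((univ : Finset (Nat.Partition k)).filter fun l => N < l.parts.sup).card := by
  classical
  have h2 : ((univ : Finset (Nat.Partition k)).filter fun l => N < l.parts.sup) =
      ((univ : Finset (Nat.Partition k)).filter fun l => ¬ ∀ a ∈ l.parts, a ≤ N) := by
    apply Finset.filter_congr
    intro l _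
    rw [← Multiset.sup_le, not_le]
  have h := Finset.card_filter_add_card_filter_not
    (s := (univ : Finset (Nat.Partition k))) (p := fun l => ∀ a ∈ l.parts, a ≤ N)
  rw [h2]
  unfold f pp
  rw [← Finset.card_univ]
  omega

lemma g_sum (n N m : ℕ) (hm : m ≤ n) :
    g m N = ∑ e ∈ Icc 1 n, ∑ t ∈ Icc 1 n, if e ≤ N ∧ e * t = m then 1 else 0 := by
  classical
  have hset : (m.divisors.filter fun e => e ≤ N)
      = (Icc 1 n).filter fun e => e ≤ N ∧ e ∣ m ∧ m ≠ 0 := by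
    ext e
    simp only [Finset.mem_filter, Nat.mem_divisors, Finset.mem_Icc]
    constructor
    · rintro ⟨⟨hd, hm0⟩, hN⟩
      have h1 : 1 ≤ e := Nat.pos_of_dvd_of_pos hd (Nat.pos_of_ne_zero hm0)
      have h2 : e ≤ m := Nat.le_of_dvd (Nat.pos_of_ne_zero hm0) hd
      exact ⟨⟨h1, h2.trans hm⟩, hN, hd, hm0⟩
    · rintro ⟨_, hN, hd, hm0⟩; exact ⟨⟨hd, hm0⟩, hN⟩
  unfold g
  rw [hset, Finset.card_filter]
  apply Finset.sum_congr rfl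
  intro e he
  rw [Finset.mem_Icc] at he
  by_cases hd : e ≤ N ∧ e ∣ m ∧ m ≠ 0
  · rw [if_pos hd]
    obtain ⟨t0, ht0⟩ := hd.2.1
    have hm0 := hd.2.2
    have ht01 : 1 ≤ t0 := by
      rcases Nat.eq_zero_or_pos t0 with h | h
      · exfalso; apply hm0; rw [ht0, h, Nat.mul_zero]
      · exact h
    have ht0n : t0 ≤ n := by
      have h5 : t0 ≤ e * t0 := Nat.le_mul_of_pos_left t0 (show 0 < e by omega)
      omega
    have hc : ∀ t ∈ Icc 1 n, (if e ≤ N ∧ e * t = m then (1 : ℕ) else 0)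
        = if t = t0 then 1 else 0 := by
      intro t _
      by_cases h : t = t0
      · subst h; rw [if_pos ⟨hd.1, ht0.symm⟩, if_pos rfl]
      · rw [if_neg, if_neg h]
        rintro ⟨_, hEt⟩
        exact h (Nat.eq_of_mul_eq_mul_left (show 0 < e by omega) (show e * t = e * t0 by rw [hEt, ht0]))
    rw [Finset.sum_congr rfl hc, Finset.sum_ite_eq' (Icc 1 n) t0 (fun _ => (1 : ℕ)),
      if_pos (Finset.mem_Icc.2 ⟨ht01, ht0n⟩)]
  · rw [if_neg hd]
    symm
    apply Finset.sum_eq_zero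
    intro t htmem
    rw [Finset.mem_Icc] at htmem
    rw [if_neg]
    rintro ⟨hN, hEt⟩
    apply hd
    refine ⟨hN, ⟨t, hEt.symm⟩, ?_⟩
    have : 1 ≤ e * t := Nat.mul_pos (by omega) (by omega)
    omega

lemma k_collapse {n e t N : ℕ} (G : ℕ) :
    (∑ k ∈ Icc 1 n, if e ≤ N ∧ e * t = n - k then G else 0)
      = if e ≤ N ∧ e * t < n then G else 0 := by
  by_cases h : e ≤ N ∧ e * t < n
  · rw [if_pos h]
    rw [Finset.sum_eq_single_of_mem (n - e * t) (Finset.mem_Icc.2 (by omega))]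
    · rw [if_pos ⟨h.1, by omega⟩]
    · intro k hk hkne
      rw [Finset.mem_Icc] at hk
      rw [if_neg]
      rintro ⟨_, h2⟩
      exact hkne (by omega)
  · rw [if_neg h]
    apply Finset.sum_eq_zero
    intro k hk
    rw [Finset.mem_Icc] at hk
    rw [if_neg]
    rintro ⟨h1, h2⟩
    exact h ⟨h1, by omega⟩

lemma et_lt {n : ℕ} (l : Nat.Partition n) {e t N : ℕ} (he : 1 ≤ e) (ht : 1 ≤ t)
    (heN : e ≤ N) (hNA : N < l.parts.sup) (htc : t ≤ l.parts.count e) : e * t < n := by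
  obtain ⟨x, hx, hNx⟩ := sup_mem_exists l hNA
  have hxe : x ≠ e := by omega
  have hle : Multiset.replicate t e + {x} ≤ l.parts := by
    rw [Multiset.le_iff_count]
    intro a
    rw [Multiset.count_add, Multiset.count_replicate, Multiset.count_singleton]
    by_cases h1 : a = e
    · subst h1
      rw [if_pos rfl, if_neg (by omega)]
      omega
    · rw [if_neg (fun hh => h1 hh.symm)]
      by_cases h2 : a = x
      · subst h2
        rw [if_pos rfl]
        have := Multiset.count_pos.2 hx
        omega
      · rw [if_neg h2]
        omega
  have hsum := multiset_sum_mono hle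
  rw [Multiset.sum_add, Multiset.sum_replicate, Multiset.sum_singleton, l.parts_sum,
    smul_eq_mul] at hsum
  have hx1 : 1 ≤ x := l.parts_pos hx
  have : t * e = e * t := Nat.mul_comm t e
  omega

lemma per_l {n : ℕ} (hn : 0 < n) (l : Nat.Partition n) :
    (∑ N ∈ Icc 1 n, ∑ e ∈ Icc 1 n, ∑ t ∈ Icc 1 n,
      if (e ≤ N ∧ e * t < n) ∧ N < l.parts.sup ∧ t ≤ l.parts.count e then 1 else 0)
      + n = l.parts.sup * Multiset.card l.parts := by
  classical
  set A := l.parts.sup with hA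
  -- simplify the condition
  have step1 : (∑ N ∈ Icc 1 n, ∑ e ∈ Icc 1 n, ∑ t ∈ Icc 1 n,
      if (e ≤ N ∧ e * t < n) ∧ N < A ∧ t ≤ l.parts.count e then (1:ℕ) else 0)
      = ∑ e ∈ Icc 1 n, ∑ N ∈ Icc 1 n, ∑ t ∈ Icc 1 n,
      if (e ≤ N ∧ N < A) ∧ t ≤ l.parts.count e then (1:ℕ) else 0 := by
    rw [Finset.sum_comm]
    refine Finset.sum_congr rfl fun e he => Finset.sum_congr rfl fun N hN =>
      Finset.sum_congr rfl fun t htm => ?_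
    rw [Finset.mem_Icc] at he hN htm
    refine if_congr ?_ rfl rfl
    constructor
    · rintro ⟨⟨h1, _⟩, h3, h4⟩; exact ⟨⟨h1, h3⟩, h4⟩
    · rintro ⟨⟨h1, h3⟩, h4⟩
      exact ⟨⟨h1, et_lt l (by omega) (by omega) h1 h3 h4⟩, h3, h4⟩
  rw [step1]
  -- collapse the t-sum
  have step2 : ∀ e ∈ Icc 1 n, (∑ N ∈ Icc 1 n, ∑ t ∈ Icc 1 n,
      if (e ≤ N ∧ N < A) ∧ t ≤ l.parts.count e then (1:ℕ) else 0)
      = (A - e) * l.parts.count e := by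
    intro e he
    rw [Finset.mem_Icc] at he
    have hcount : l.parts.count e ≤ n := le_trans (Multiset.count_le_card e l.parts) (card_le_n l)
    have hAn : A ≤ n := sup_le_n l
    have htcol : ∀ N ∈ Icc 1 n, (∑ t ∈ Icc 1 n,
        if (e ≤ N ∧ N < A) ∧ t ≤ l.parts.count e then (1:ℕ) else 0)
        = if e ≤ N ∧ N < A then l.parts.count e else 0 := by
      intro N hN
      by_cases hc : e ≤ N ∧ N < A
      · rw [if_pos hc]
        have : ∀ t ∈ Icc 1 n, (if (e ≤ N ∧ N < A) ∧ t ≤ l.parts.count e then (1:ℕ) else 0)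
            = if t ≤ l.parts.count e then 1 else 0 := by
          intro t _
          by_cases h : t ≤ l.parts.count e
          · rw [if_pos ⟨hc, h⟩, if_pos h]
          · rw [if_neg (fun hh => h hh.2), if_neg h]
        rw [Finset.sum_congr rfl this, ← Finset.card_filter]
        have : (Icc 1 n).filter (fun t => t ≤ l.parts.count e) = Icc 1 (l.parts.count e) := by
          ext a
          simp only [Finset.mem_filter, Finset.mem_Icc]
          omega
        rw [this, Nat.card_Icc]
        omega
      · rw [if_neg hc]
        apply Finset.sum_eq_zero
        intro t _
        rw [if_neg (fun hh => hc hh.1)]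
    rw [Finset.sum_congr rfl htcol, ← Finset.sum_filter]
    have : (Icc 1 n).filter (fun N => e ≤ N ∧ N < A) = Icc e (A - 1) := by
      ext a
      simp only [Finset.mem_filter, Finset.mem_Icc]
      omega
    rw [this, Finset.sum_const, Nat.card_Icc, smul_eq_mul]
    congr 1
    omega
  rw [Finset.sum_congr rfl step2]
  -- final counting
  have hmem : ∀ a ∈ l.parts, a ∈ Icc 1 n := fun a ha =>
    Finset.mem_Icc.2 ⟨l.parts_pos ha, part_le_n l ha⟩
  have hcard : ∑ e ∈ Icc 1 n, l.parts.count e = Multiset.card l.parts :=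
    Multiset.sum_count_eq_card hmem
  have hsum : ∑ e ∈ Icc 1 n, e * l.parts.count e = n := by
    have h1 := Finset.sum_multiset_map_count l.parts (id : ℕ → ℕ)
    rw [Multiset.map_id, l.parts_sum] at h1
    have h2 : ∑ a ∈ l.parts.toFinset, l.parts.count a • (id a)
        = ∑ e ∈ Icc 1 n, e * l.parts.count e := by
      rw [Finset.sum_subset (fun a ha => hmem a (Multiset.mem_toFinset.1 ha))]
      · apply Finset.sum_congr rfl
        intro a _
        simp [mul_comm]
      · intro a _ ha
        rw [Multiset.count_eq_zero_of_notMem (fun h => ha (Multiset.mem_toFinset.2 h))]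
        simp
    exact h2.symm.trans h1.symm
  have key : ∀ e ∈ Icc 1 n, A * l.parts.count e
      = (A - e) * l.parts.count e + e * l.parts.count e := by
    intro e he
    by_cases hc : l.parts.count e = 0
    · rw [hc]; ring
    · have hmem' : e ∈ l.parts := Multiset.count_pos.1 (Nat.pos_of_ne_zero hc)
      have heA : e ≤ A := Multiset.le_sup hmem'
      rw [← Nat.add_mul]
      congr 1
      omega
  calc (∑ e ∈ Icc 1 n, (A - e) * l.parts.count e) + n
      = (∑ e ∈ Icc 1 n, (A - e) * l.parts.count e)
        + ∑ e ∈ Icc 1 n, e * l.parts.count e := by rw [hsum]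
    _ = ∑ e ∈ Icc 1 n, ((A - e) * l.parts.count e + e * l.parts.count e) := by
        rw [Finset.sum_add_distrib]
    _ = ∑ e ∈ Icc 1 n, A * l.parts.count e := (Finset.sum_congr rfl key).symm
    _ = A * ∑ e ∈ Icc 1 n, l.parts.count e := by rw [Finset.mul_sum]
    _ = A * Multiset.card l.parts := by rw [hcard]

lemma S_eq (n : ℕ) (hn : 0 < n) :
    S n + n * pp n = ∑ l : Nat.Partition n, l.parts.sup * Multiset.card l.parts := by
  classical
  have step1 : S n = ∑ N ∈ Icc 1 n, ∑ e ∈ Icc 1 n, ∑ t ∈ Icc 1 n,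
      if e ≤ N ∧ e * t < n then
        ((univ : Finset (Nat.Partition n)).filter fun l =>
          N < l.parts.sup ∧ t ≤ l.parts.count e).card
      else 0 := by
    unfold S
    have hstep : ∀ k ∈ Icc 1 n, ∀ N ∈ Icc 1 n, f k N * g (n - k) N
        = ∑ e ∈ Icc 1 n, ∑ t ∈ Icc 1 n,
          if e ≤ N ∧ e * t = n - k then
            ((univ : Finset (Nat.Partition n)).filter fun l =>
              N < l.parts.sup ∧ t ≤ l.parts.count e).card
          else 0 := by
      intro k hk N hN
      rw [Finset.mem_Icc] at hk hN
      rw [f_eq, g_sum n N (n - k) (by omega), Finset.mul_sum]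
      refine Finset.sum_congr rfl fun e he => ?_
      rw [Finset.mul_sum]
      refine Finset.sum_congr rfl fun t htm => ?_
      rw [Finset.mem_Icc] at he htm
      by_cases hc : e ≤ N ∧ e * t = n - k
      · rw [if_pos hc, if_pos hc, Nat.mul_one]
        exact key_bij (by omega) (by omega) hc.1 (by omega)
      · rw [if_neg hc, if_neg hc, Nat.mul_zero]
    calc ∑ k ∈ Icc 1 n, ∑ N ∈ Icc 1 n, f k N * g (n - k) N
        = ∑ k ∈ Icc 1 n, ∑ N ∈ Icc 1 n, ∑ e ∈ Icc 1 n, ∑ t ∈ Icc 1 n,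
          if e ≤ N ∧ e * t = n - k then
            ((univ : Finset (Nat.Partition n)).filter fun l =>
              N < l.parts.sup ∧ t ≤ l.parts.count e).card
          else 0 := Finset.sum_congr rfl fun k hk => Finset.sum_congr rfl (hstep k hk)
      _ = ∑ N ∈ Icc 1 n, ∑ k ∈ Icc 1 n, ∑ e ∈ Icc 1 n, ∑ t ∈ Icc 1 n, _ := Finset.sum_comm
      _ = ∑ N ∈ Icc 1 n, ∑ e ∈ Icc 1 n, ∑ k ∈ Icc 1 n, ∑ t ∈ Icc 1 n,
          if e ≤ N ∧ e * t = n - k then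
            ((univ : Finset (Nat.Partition n)).filter fun l =>
              N < l.parts.sup ∧ t ≤ l.parts.count e).card
          else 0 := Finset.sum_congr rfl fun N _ => Finset.sum_comm
      _ = ∑ N ∈ Icc 1 n, ∑ e ∈ Icc 1 n, ∑ t ∈ Icc 1 n, ∑ k ∈ Icc 1 n,
          if e ≤ N ∧ e * t = n - k then
            ((univ : Finset (Nat.Partition n)).filter fun l =>
              N < l.parts.sup ∧ t ≤ l.parts.count e).card
          else 0 := Finset.sum_congr rfl fun N _ => Finset.sum_congr rfl fun e _ =>
            Finset.sum_comm
      _ = ∑ N ∈ Icc 1 n, ∑ e ∈ Icc 1 n, ∑ t ∈ Icc 1 n,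
          if e ≤ N ∧ e * t < n then
            ((univ : Finset (Nat.Partition n)).filter fun l =>
              N < l.parts.sup ∧ t ≤ l.parts.count e).card
          else 0 := Finset.sum_congr rfl fun N _ => Finset.sum_congr rfl fun e _ =>
            Finset.sum_congr rfl fun t _ => k_collapse _
  have step2 : S n = ∑ l : Nat.Partition n, ∑ N ∈ Icc 1 n, ∑ e ∈ Icc 1 n, ∑ t ∈ Icc 1 n,
      if (e ≤ N ∧ e * t < n) ∧ N < l.parts.sup ∧ t ≤ l.parts.count e then 1 else 0 := by
    rw [step1]
    have expand : ∀ N ∈ Icc 1 n, ∀ e ∈ Icc 1 n, ∀ t ∈ Icc 1 n,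
        (if e ≤ N ∧ e * t < n then
          ((univ : Finset (Nat.Partition n)).filter fun l =>
            N < l.parts.sup ∧ t ≤ l.parts.count e).card
        else 0)
        = ∑ l : Nat.Partition n,
            if (e ≤ N ∧ e * t < n) ∧ N < l.parts.sup ∧ t ≤ l.parts.count e then 1 else 0 := by
      intro N _ e _ t _
      by_cases hc : e ≤ N ∧ e * t < n
      · rw [if_pos hc, Finset.card_filter]
        exact Finset.sum_congr rfl fun l _ => by
          by_cases h : N < l.parts.sup ∧ t ≤ l.parts.count e
          · rw [if_pos h, if_pos ⟨hc, h⟩]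
          · rw [if_neg h, if_neg (fun hh => h hh.2)]
      · rw [if_neg hc]
        symm
        exact Finset.sum_eq_zero fun l _ => if_neg (fun hh => hc hh.1)
    calc (∑ N ∈ Icc 1 n, ∑ e ∈ Icc 1 n, ∑ t ∈ Icc 1 n,
        if e ≤ N ∧ e * t < n then
          ((univ : Finset (Nat.Partition n)).filter fun l =>
            N < l.parts.sup ∧ t ≤ l.parts.count e).card
        else 0)
        = ∑ N ∈ Icc 1 n, ∑ e ∈ Icc 1 n, ∑ t ∈ Icc 1 n, ∑ l : Nat.Partition n,
          if (e ≤ N ∧ e * t < n) ∧ N < l.parts.sup ∧ t ≤ l.parts.count e then 1 else 0 :=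
          Finset.sum_congr rfl fun N hN => Finset.sum_congr rfl fun e he =>
            Finset.sum_congr rfl fun t htm => expand N hN e he t htm
      _ = ∑ N ∈ Icc 1 n, ∑ e ∈ Icc 1 n, ∑ l : Nat.Partition n, ∑ t ∈ Icc 1 n,
          if (e ≤ N ∧ e * t < n) ∧ N < l.parts.sup ∧ t ≤ l.parts.count e then 1 else 0 :=
          Finset.sum_congr rfl fun N _ => Finset.sum_congr rfl fun e _ => Finset.sum_comm
      _ = ∑ N ∈ Icc 1 n, ∑ l : Nat.Partition n, ∑ e ∈ Icc 1 n, ∑ t ∈ Icc 1 n,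
          if (e ≤ N ∧ e * t < n) ∧ N < l.parts.sup ∧ t ≤ l.parts.count e then 1 else 0 :=
          Finset.sum_congr rfl fun N _ => Finset.sum_comm
      _ = ∑ l : Nat.Partition n, ∑ N ∈ Icc 1 n, ∑ e ∈ Icc 1 n, ∑ t ∈ Icc 1 n,
          if (e ≤ N ∧ e * t < n) ∧ N < l.parts.sup ∧ t ≤ l.parts.count e then 1 else 0 :=
          Finset.sum_comm
  have hppn : ∑ _l : Nat.Partition n, n = pp n * n := by
    rw [Finset.sum_const, Finset.card_univ, smul_eq_mul]
    rfl
  calc S n + n * pp n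
      = (∑ l : Nat.Partition n, ∑ N ∈ Icc 1 n, ∑ e ∈ Icc 1 n, ∑ t ∈ Icc 1 n,
        if (e ≤ N ∧ e * t < n) ∧ N < l.parts.sup ∧ t ≤ l.parts.count e then 1 else 0)
        + ∑ _l : Nat.Partition n, n := by rw [← step2, hppn, Nat.mul_comm]
    _ = ∑ l : Nat.Partition n, ((∑ N ∈ Icc 1 n, ∑ e ∈ Icc 1 n, ∑ t ∈ Icc 1 n,
        if (e ≤ N ∧ e * t < n) ∧ N < l.parts.sup ∧ t ≤ l.parts.count e then 1 else 0) + n) := by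
        rw [Finset.sum_add_distrib]
    _ = ∑ l : Nat.Partition n, l.parts.sup * Multiset.card l.parts :=
        Finset.sum_congr rfl fun l _ => per_l hn l

lemma bij_erase {n m : ℕ} (hm1 : 1 ≤ m) (hmn : m ≤ n) :
    ((univ : Finset (Nat.Partition n)).filter fun l => l.parts.sup ≤ m ∧ m ∈ l.parts).card
      = ((univ : Finset (Nat.Partition (n - m))).filter fun μ => μ.parts.sup ≤ m).card := by
  classical
  refine Finset.card_bij'
    (fun l _ => ⟨l.parts.erase m, ?_, ?_⟩)
    (fun μ _ => ⟨m ::ₘ μ.parts, ?_, ?_⟩) ?_ ?_ ?_ ?_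
  · intro i hi
    exact l.parts_pos (Multiset.mem_of_mem_erase hi)
  · have hl' := (Finset.mem_filter.1 ‹l ∈ _›).2
    have hc := congrArg Multiset.sum (Multiset.cons_erase hl'.2)
    rw [Multiset.sum_cons, l.parts_sum] at hc
    omega
  · intro i hi
    rcases Multiset.mem_cons.1 hi with h | h
    · omega
    · exact μ.parts_pos h
  · rw [Multiset.sum_cons, μ.parts_sum]
    omega
  · intro l hl
    have hl' := (Finset.mem_filter.1 hl).2
    refine Finset.mem_filter.2 ⟨Finset.mem_univ _, ?_⟩
    exact Multiset.sup_le.2 fun b hb =>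
      le_trans (Multiset.le_sup (Multiset.mem_of_mem_erase hb)) hl'.1
  · intro μ hμ
    have hμ' := (Finset.mem_filter.1 hμ).2
    refine Finset.mem_filter.2 ⟨Finset.mem_univ _, ?_, ?_⟩
    · rw [Multiset.sup_cons]
      exact sup_le_iff.2 ⟨le_rfl, hμ'⟩
    · exact Multiset.mem_cons_self m _
  · intro l hl
    apply Nat.Partition.ext
    exact Multiset.cons_erase (Finset.mem_filter.1 hl).2.2
  · intro μ _
    apply Nat.Partition.ext
    exact Multiset.erase_cons_head m μ.parts

lemma map_pred_sum {n m : ℕ} (l : Nat.Partition n) (hc : Multiset.card l.parts = m) :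
    (l.parts.map (· - 1)).sum + m = n := by
  have h1 : l.parts.map (fun x => x) = l.parts.map (fun x => (x - 1) + 1) :=
    Multiset.map_congr rfl (fun x hx => by have := l.parts_pos hx; omega)
  have h2 := congrArg Multiset.sum h1
  rw [Multiset.map_id', Multiset.sum_map_add, l.parts_sum] at h2
  have h3 : (l.parts.map fun _ => 1).sum = Multiset.card l.parts := by
    rw [Multiset.map_const', Multiset.sum_replicate, smul_eq_mul, Nat.mul_one]
  omega

lemma bij_pred {n m : ℕ} (hm1 : 1 ≤ m) (hmn : m ≤ n) :
    ((univ : Finset (Nat.Partition n)).filter fun l => Multiset.card l.parts = m).card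
      = ((univ : Finset (Nat.Partition (n - m))).filter
          fun μ => Multiset.card μ.parts ≤ m).card := by
  classical
  refine Finset.card_bij'
    (fun l _ => ⟨(l.parts.map (· - 1)).filter (· ≠ 0), ?_, ?_⟩)
    (fun μ _ => ⟨μ.parts.map (· + 1) + Multiset.replicate (m - Multiset.card μ.parts) 1, ?_, ?_⟩)
    ?_ ?_ ?_ ?_
  · intro i hi
    have := Multiset.of_mem_filter hi
    omega
  · have hl' := (Finset.mem_filter.1 ‹l ∈ _›).2
    have h1 := map_pred_sum l hl'
    have h2 : ((l.parts.map (· - 1)).filter (· ≠ 0)).sum = (l.parts.map (· - 1)).sum := by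
      conv_rhs => rw [← Multiset.filter_add_not (· ≠ 0) (l.parts.map (· - 1))]
      rw [Multiset.sum_add]
      have : ((l.parts.map (· - 1)).filter (fun a => ¬ a ≠ 0)).sum = 0 := by
        apply Multiset.sum_eq_zero
        intro a ha
        have := Multiset.of_mem_filter ha
        omega
      omega
    omega
  · intro i hi
    rcases Multiset.mem_add.1 hi with h | h
    · obtain ⟨a, _, rfl⟩ := Multiset.mem_map.1 h
      omega
    · have := Multiset.eq_of_mem_replicate h
      omega
  · have hμ' := (Finset.mem_filter.1 ‹μ ∈ _›).2
    have h3 : (μ.parts.map fun _ => (1:ℕ)).sum = Multiset.card μ.parts := by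
      rw [Multiset.map_const', Multiset.sum_replicate, smul_eq_mul, Nat.mul_one]
    rw [Multiset.sum_add, Multiset.sum_map_add, Multiset.map_id', μ.parts_sum, h3,
      Multiset.sum_replicate, smul_eq_mul, Nat.mul_one]
    omega
  · intro l hl
    refine Finset.mem_filter.2 ⟨Finset.mem_univ _, ?_⟩
    calc Multiset.card ((l.parts.map (· - 1)).filter (· ≠ 0))
        ≤ Multiset.card (l.parts.map (· - 1)) :=
          Multiset.card_le_card (Multiset.filter_le _ _)
      _ = m := by rw [Multiset.card_map]; exact (Finset.mem_filter.1 hl).2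
  · intro μ hμ
    have hμ' := (Finset.mem_filter.1 hμ).2
    refine Finset.mem_filter.2 ⟨Finset.mem_univ _, ?_⟩
    show Multiset.card (μ.parts.map (· + 1) + Multiset.replicate (m - Multiset.card μ.parts) 1) = m
    rw [Multiset.card_add, Multiset.card_map, Multiset.card_replicate]
    omega
  · intro l hl
    have hl' := (Finset.mem_filter.1 hl).2
    apply Nat.Partition.ext
    show ((l.parts.map (· - 1)).filter (· ≠ 0)).map (· + 1)
        + Multiset.replicate (m - Multiset.card ((l.parts.map (· - 1)).filter (· ≠ 0))) 1
        = l.parts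
    have hfm : (l.parts.map (· - 1)).filter (· ≠ 0) = (l.parts.filter fun x => x ≠ 1).map (· - 1) := by
      rw [Multiset.filter_map]
      congr 1
      apply Multiset.filter_congr
      intro x hx
      have := l.parts_pos hx
      show x - 1 ≠ 0 ↔ x ≠ 1
      omega
    have hback : ((l.parts.filter fun x => x ≠ 1).map (· - 1)).map (· + 1)
        = l.parts.filter fun x => x ≠ 1 := by
      rw [Multiset.map_map]
      rw [show ((· + 1) ∘ (· - 1) : ℕ → ℕ) = fun x => (x - 1) + 1 from rfl]
      rw [Multiset.map_congr rfl (fun x hx => by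
        have := l.parts_pos (Multiset.mem_of_mem_filter hx)
        show x - 1 + 1 = x
        omega)]
      exact Multiset.map_id' _
    have hone : l.parts.filter (fun x => ¬ x ≠ 1) = l.parts.filter (fun x => x = 1) :=
      Multiset.filter_congr (fun x _ => by tauto)
    have hcnt : Multiset.card ((l.parts.map (· - 1)).filter (· ≠ 0))
        = Multiset.card (l.parts.filter fun x => x ≠ 1) := by
      rw [hfm, Multiset.card_map]
    rw [hfm, hback, Multiset.card_map]
    have hsplit := Multiset.filter_add_not (fun x => x ≠ 1) l.parts
    have hcardsplit := congrArg Multiset.card hsplit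
    rw [Multiset.card_add] at hcardsplit
    have hrw : m - Multiset.card (l.parts.filter fun x => x ≠ 1)
        = Multiset.card (l.parts.filter fun x => ¬ x ≠ 1) := by omega
    rw [hrw, hone, Multiset.filter_eq', Multiset.card_replicate, ← Multiset.filter_eq',
      ← hone, hsplit]
  · intro μ hμ
    have hμ' := (Finset.mem_filter.1 hμ).2
    apply Nat.Partition.ext
    show (((μ.parts.map (· + 1) + Multiset.replicate (m - Multiset.card μ.parts) 1).map
        (· - 1)).filter (· ≠ 0)) = μ.parts
    rw [Multiset.map_add, Multiset.map_map, Multiset.map_replicate]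
    rw [show ((· - 1) ∘ (· + 1) : ℕ → ℕ) = fun x => x from by funext x; simp]
    rw [Multiset.map_id', Multiset.filter_add]
    have h1 : μ.parts.filter (· ≠ 0) = μ.parts :=
      Multiset.filter_eq_self.2 fun a ha => by have := μ.parts_pos ha; omega
    have h2 : (Multiset.replicate (m - Multiset.card μ.parts) (1 - 1)).filter (· ≠ 0) = 0 :=
      Multiset.filter_eq_nil.2 fun a ha => by
        have := Multiset.eq_of_mem_replicate ha
        omega
    rw [h1, h2, add_zero]

lemma split_sup (n m : ℕ) :
    ((univ : Finset (Nat.Partition n)).filter fun l => l.parts.sup ≤ m + 1).card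
      = ((univ : Finset (Nat.Partition n)).filter fun l => l.parts.sup ≤ m).card
        + ((univ : Finset (Nat.Partition n)).filter fun l =>
            l.parts.sup ≤ m + 1 ∧ (m + 1) ∈ l.parts).card := by
  classical
  have h := Finset.card_filter_add_card_filter_not
    (s := (univ : Finset (Nat.Partition n)).filter fun l => l.parts.sup ≤ m + 1)
    (p := fun l => (m + 1) ∈ l.parts)
  rw [Finset.filter_filter, Finset.filter_filter] at h
  have e1 : ((univ : Finset (Nat.Partition n)).filter
        fun l => l.parts.sup ≤ m + 1 ∧ ¬ (m + 1) ∈ l.parts)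
      = (univ : Finset (Nat.Partition n)).filter fun l => l.parts.sup ≤ m := by
    apply Finset.filter_congr
    intro l _
    constructor
    · rintro ⟨hs, hm⟩
      apply Multiset.sup_le.2
      intro b hb
      have h1 : b ≤ m + 1 := le_trans (Multiset.le_sup hb) hs
      have h2 : b ≠ m + 1 := fun h => hm (h ▸ hb)
      omega
    · intro hs
      refine ⟨le_trans hs (Nat.le_succ m), fun hm => ?_⟩
      have := le_trans (Multiset.le_sup hm) hs
      omega
  rw [e1] at h
  omega

lemma split_card (n m : ℕ) :
    ((univ : Finset (Nat.Partition n)).filter fun l => Multiset.card l.parts ≤ m + 1).card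
      = ((univ : Finset (Nat.Partition n)).filter fun l => Multiset.card l.parts ≤ m).card
        + ((univ : Finset (Nat.Partition n)).filter
            fun l => Multiset.card l.parts = m + 1).card := by
  classical
  have h := Finset.card_filter_add_card_filter_not
    (s := (univ : Finset (Nat.Partition n)).filter fun l => Multiset.card l.parts ≤ m + 1)
    (p := fun l => Multiset.card l.parts = m + 1)
  rw [Finset.filter_filter, Finset.filter_filter] at h
  have e1 : ((univ : Finset (Nat.Partition n)).filter
        fun l => Multiset.card l.parts ≤ m + 1 ∧ ¬ Multiset.card l.parts = m + 1)
      = (univ : Finset (Nat.Partition n)).filter fun l => Multiset.card l.parts ≤ m :=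
    Finset.filter_congr fun l _ => by omega
  have e2 : ((univ : Finset (Nat.Partition n)).filter
        fun l => Multiset.card l.parts ≤ m + 1 ∧ Multiset.card l.parts = m + 1)
      = (univ : Finset (Nat.Partition n)).filter fun l => Multiset.card l.parts = m + 1 :=
    Finset.filter_congr fun l _ => by omega
  rw [e1, e2] at h
  omega

lemma C1 (n : ℕ) : ∀ m : ℕ,
    ((univ : Finset (Nat.Partition n)).filter fun l => l.parts.sup ≤ m).card
      = ((univ : Finset (Nat.Partition n)).filter fun l => Multiset.card l.parts ≤ m).card := by
  induction n using Nat.strong_induction_on with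
  | _ n ih =>
    intro m
    induction m with
    | zero =>
      have e1 : ((univ : Finset (Nat.Partition n)).filter fun l => l.parts.sup ≤ 0)
          = (univ : Finset (Nat.Partition n)).filter fun l => l.parts = 0 := by
        apply Finset.filter_congr
        intro l _
        constructor
        · intro hs
          rw [Multiset.eq_zero_iff_forall_notMem]
          intro a ha
          have h1 := l.parts_pos ha
          have h2 := le_trans (Multiset.le_sup ha) hs
          omega
        · intro h
          rw [h, Multiset.sup_zero]
          rfl
      have e2 : ((univ : Finset (Nat.Partition n)).filter fun l => Multiset.card l.parts ≤ 0)
          = (univ : Finset (Nat.Partition n)).filter fun l => l.parts = 0 := by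
        apply Finset.filter_congr
        intro l _
        rw [Nat.le_zero, Multiset.card_eq_zero]
      rw [e1, e2]
    | succ m ihm =>
      rcases Nat.eq_zero_or_pos n with rfl | hn
      · rw [Finset.filter_true_of_mem, Finset.filter_true_of_mem]
        · intro l _
          rw [parts_zero l]
          exact Nat.zero_le _
        · intro l _
          rw [parts_zero l, Multiset.sup_zero]
          exact Nat.zero_le _
      rcases le_or_gt (m + 1) n with hmn | hmn
      · rw [split_sup, split_card, ihm, bij_erase (Nat.succ_le_succ (Nat.zero_le m)) hmn,
          bij_pred (Nat.succ_le_succ (Nat.zero_le m)) hmn, ih (n - (m + 1)) (by omega) (m + 1)]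
      · rw [split_sup, split_card, ihm]
        have e1 : ((univ : Finset (Nat.Partition n)).filter
              fun l => l.parts.sup ≤ m + 1 ∧ (m + 1) ∈ l.parts) = ∅ := by
          rw [Finset.filter_eq_empty_iff]
          intro l _
          rintro ⟨_, hm⟩
          have := part_le_n l hm
          omega
        have e2 : ((univ : Finset (Nat.Partition n)).filter
              fun l => Multiset.card l.parts = m + 1) = ∅ := by
          rw [Finset.filter_eq_empty_iff]
          intro l _
          have := card_le_n l
          omega
        rw [e1, e2]

lemma C1_lt (n m : ℕ) :
    ((univ : Finset (Nat.Partition n)).filter fun l => m < l.parts.sup).card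
      = ((univ : Finset (Nat.Partition n)).filter fun l => m < Multiset.card l.parts).card := by
  classical
  have h1 := Finset.card_filter_add_card_filter_not
    (s := (univ : Finset (Nat.Partition n))) (p := fun l => l.parts.sup ≤ m)
  have h2 := Finset.card_filter_add_card_filter_not
    (s := (univ : Finset (Nat.Partition n))) (p := fun l => Multiset.card l.parts ≤ m)
  have e1 : ((univ : Finset (Nat.Partition n)).filter fun l => ¬ l.parts.sup ≤ m)
      = (univ : Finset (Nat.Partition n)).filter fun l => m < l.parts.sup :=
    Finset.filter_congr fun l _ => by rw [not_le]
  have e2 : ((univ : Finset (Nat.Partition n)).filter fun l => ¬ Multiset.card l.parts ≤ m)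
      = (univ : Finset (Nat.Partition n)).filter fun l => m < Multiset.card l.parts :=
    Finset.filter_congr fun l _ => by rw [not_le]
  rw [e1] at h1
  rw [e2] at h2
  have := C1 n m
  omega

lemma odd_sum (a : ℕ) : ∑ m ∈ range a, (2 * m + 1) = a ^ 2 := by
  induction a with
  | zero => simp
  | succ a ih =>
    rw [Finset.sum_range_succ, ih]
    ring

lemma sq_as_sum {a n : ℕ} (h : a ≤ n) :
    ∑ m ∈ range n, (if m < a then 2 * m + 1 else 0) = a ^ 2 := by
  rw [← Finset.sum_filter]
  have e : (range n).filter (fun m => m < a) = range a := by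
    ext b
    simp only [Finset.mem_filter, Finset.mem_range]
    omega
  rw [e, odd_sum]

lemma sum_sq_transfer (n : ℕ) :
    (∑ l : Nat.Partition n, l.parts.sup ^ 2)
      = ∑ l : Nat.Partition n, (Multiset.card l.parts) ^ 2 := by
  classical
  have key : ∀ F : Nat.Partition n → ℕ, (∀ l, F l ≤ n) →
      (∑ l : Nat.Partition n, F l ^ 2)
        = ∑ m ∈ range n, (2 * m + 1) * ((univ : Finset (Nat.Partition n)).filter
            fun l => m < F l).card := by
    intro F hF
    calc ∑ l : Nat.Partition n, F l ^ 2
        = ∑ l : Nat.Partition n, ∑ m ∈ range n, (if m < F l then 2 * m + 1 else 0) :=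
          Finset.sum_congr rfl fun l _ => (sq_as_sum (hF l)).symm
      _ = ∑ m ∈ range n, ∑ l : Nat.Partition n, (if m < F l then 2 * m + 1 else 0) :=
          Finset.sum_comm
      _ = ∑ m ∈ range n, (2 * m + 1) * ((univ : Finset (Nat.Partition n)).filter
            fun l => m < F l).card := by
          refine Finset.sum_congr rfl fun m _ => ?_
          rw [Finset.card_filter, Finset.mul_sum]
          refine Finset.sum_congr rfl fun l _ => ?_
          by_cases h : m < F l
          · rw [if_pos h, if_pos h, Nat.mul_one]
          · rw [if_neg h, if_neg h, Nat.mul_zero]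
  rw [key _ (fun l => sup_le_n l), key _ (fun l => card_le_n l)]
  exact Finset.sum_congr rfl fun m _ => by rw [C1_lt n m]

lemma p2_eq (n : ℕ) : p2 n = ∑ l : Nat.Partition n, (Multiset.card l.parts) ^ 2 := by
  classical
  unfold p2 pmn
  rw [← Finset.sum_fiberwise_of_maps_to
    (g := fun l : Nat.Partition n => Multiset.card l.parts)
    (t := range (n + 1))
    (fun l _ => Finset.mem_range.2 (Nat.lt_succ_of_le (card_le_n l)))
    (fun l => (Multiset.card l.parts) ^ 2)]
  refine Finset.sum_congr rfl fun m _ => ?_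
  have e : ∀ l ∈ (univ : Finset (Nat.Partition n)).filter
      (fun l => Multiset.card l.parts = m), (Multiset.card l.parts) ^ 2 = m ^ 2 := by
    intro l hl
    rw [(Finset.mem_filter.1 hl).2]
  rw [Finset.sum_congr rfl e, Finset.sum_const, smul_eq_mul, Nat.mul_comm]

lemma N2_eq (n : ℕ) :
    N2 n = ∑ l : Nat.Partition n, ((l.parts.sup : ℤ) - (Multiset.card l.parts : ℤ)) ^ 2 := by
  classical
  unfold N2 Nrank
  have maps : ∀ l ∈ (univ : Finset (Nat.Partition n)), rank l ∈ Finset.Icc (-(n : ℤ)) n := by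
    intro l _
    unfold rank
    have h1 := sup_le_n l
    have h2 := card_le_n l
    rw [Finset.mem_Icc]
    constructor
    · have : (Multiset.card l.parts : ℤ) ≤ n := by exact_mod_cast h2
      have h0 : (0 : ℤ) ≤ (l.parts.sup : ℤ) := Int.natCast_nonneg _
      omega
    · have : (l.parts.sup : ℤ) ≤ n := by exact_mod_cast h1
      have h0 : (0 : ℤ) ≤ (Multiset.card l.parts : ℤ) := Int.natCast_nonneg _
      omega
  have h1 : ∑ l : Nat.Partition n, ((l.parts.sup : ℤ) - (Multiset.card l.parts : ℤ)) ^ 2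
      = ∑ l : Nat.Partition n, (rank l) ^ 2 :=
    Finset.sum_congr rfl fun l _ => by unfold rank; ring
  rw [h1, ← Finset.sum_fiberwise_of_maps_to maps (fun l => (rank l) ^ 2)]
  refine Finset.sum_congr rfl fun m _ => ?_
  have e : ∀ l ∈ (univ : Finset (Nat.Partition n)).filter (fun l => rank l = m),
      (rank l) ^ 2 = m ^ 2 := by
    intro l hl
    rw [(Finset.mem_filter.1 hl).2]
  rw [Finset.sum_congr rfl e, Finset.sum_const, nsmul_eq_mul]
  exact mul_comm _ _

end Aux

/-- S(n) = p₂(n) − n p(n) − N₂(n)/2, and in particular S(n) ≥ 0. -/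
theorem stmt13 (n : ℕ) (hn : 0 < n) :
    (S n : ℚ) = (p2 n : ℚ) - n * pp n - (N2 n : ℚ) / 2 ∧ 0 ≤ S n := by
  refine ⟨?_, Nat.zero_le _⟩
  have qS : (S n : ℚ) + n * pp n
      = ∑ l : Nat.Partition n, (l.parts.sup : ℚ) * (Multiset.card l.parts : ℚ) := by
    have h := congrArg (fun x : ℕ => (x : ℚ)) (S_eq n hn)
    push_cast at h
    exact h
  have qp2 : (p2 n : ℚ) = ∑ l : Nat.Partition n, (Multiset.card l.parts : ℚ) ^ 2 := by
    have h := congrArg (fun x : ℕ => (x : ℚ)) (p2_eq n)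
    push_cast at h
    exact h
  have qsq : (∑ l : Nat.Partition n, (l.parts.sup : ℚ) ^ 2)
      = ∑ l : Nat.Partition n, (Multiset.card l.parts : ℚ) ^ 2 := by
    have h := congrArg (fun x : ℕ => (x : ℚ)) (sum_sq_transfer n)
    push_cast at h
    exact h
  have qN2 : (N2 n : ℚ)
      = ∑ l : Nat.Partition n, ((l.parts.sup : ℚ) - (Multiset.card l.parts : ℚ)) ^ 2 := by
    have h := congrArg (fun x : ℤ => (x : ℚ)) (N2_eq n)
    push_cast at h
    exact h
  have qN2' : (N2 n : ℚ)
      = (∑ l : Nat.Partition n, (l.parts.sup : ℚ) ^ 2)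
        - 2 * (∑ l : Nat.Partition n, (l.parts.sup : ℚ) * (Multiset.card l.parts : ℚ))
        + ∑ l : Nat.Partition n, (Multiset.card l.parts : ℚ) ^ 2 := by
    rw [qN2]
    rw [show (∑ l : Nat.Partition n, ((l.parts.sup : ℚ) - (Multiset.card l.parts : ℚ)) ^ 2)
        = ∑ l : Nat.Partition n, ((l.parts.sup : ℚ) ^ 2
          - 2 * ((l.parts.sup : ℚ) * (Multiset.card l.parts : ℚ))
          + (Multiset.card l.parts : ℚ) ^ 2) from Finset.sum_congr rfl fun l _ => by ring]
    rw [Finset.sum_add_distrib, Finset.sum_sub_distrib, ← Finset.mul_sum]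
  linarith [qS, qp2, qN2', qsq]
end
end

section
/- As formal power series in q: Σ_{n≥1} (−1)^n q^{n(n+1)/2} / ((q;q)_n (1−q^n)) = Σ_{n≥0} ((q^{n+1};q)_∞ − 1). -/
open Finset PowerSeries

noncomputable section

def trm (j : ℕ) : PowerSeries ℚ := ((-1 : ℚ) ^ j) • (X ^ (j * (j + 1) / 2) * (qPoch j)⁻¹)

def Rn (n : ℕ) : PowerSeries ℚ := 1 + seriesSum (fun j => X ^ (n * (j + 1)) * trm (j + 1))

lemma tri_succ (j : ℕ) : (j + 1) * (j + 2) / 2 = j * (j + 1) / 2 + (j + 1) := by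
  have h : (j + 1) * (j + 2) = j * (j + 1) + (j + 1) * 2 := by ring
  rw [h, Nat.add_mul_div_right _ _ (by norm_num : 0 < 2)]

lemma tri_ge (j : ℕ) : j ≤ j * (j + 1) / 2 := by
  rw [Nat.le_div_iff_mul_le (by norm_num : 0 < 2)]
  nlinarith [Nat.le_add_left j (j*j)]

lemma constC_one_sub_X_pow (k : ℕ) (hk : 0 < k) :
    constantCoeff (1 - X ^ k : PowerSeries ℚ) = 1 := by
  rw [map_sub, map_one, map_pow, constantCoeff_X, zero_pow hk.ne', sub_zero]

lemma constC_qPoch (j : ℕ) : constantCoeff (qPoch j) = 1 := by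
  rw [qPoch, map_prod]
  refine Finset.prod_eq_one fun k hk => ?_
  exact constC_one_sub_X_pow k (Finset.mem_Icc.mp hk).1

lemma qPoch_zero : qPoch 0 = 1 := by simp [qPoch]

lemma qPoch_succ (j : ℕ) : qPoch (j + 1) = qPoch j * (1 - X ^ (j + 1)) :=
  Finset.prod_Icc_succ_top (Nat.succ_le_succ (Nat.zero_le j)) _

lemma trm_zero : trm 0 = 1 := by
  simp [trm, qPoch_zero]

lemma coeff_trm_zero {j N : ℕ} (h : N < j) : coeff N (trm j) = 0 := by
  rw [trm, map_smul, coeff_X_pow_mul', if_neg, smul_zero]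
  exact fun hle => absurd (le_trans (tri_ge j) hle) (by omega)

lemma trm_succ_mul (j : ℕ) : trm (j + 1) * (1 - X ^ (j + 1)) = -(X ^ (j + 1) * trm j) := by
  have h1 : (qPoch (j + 1))⁻¹ * (1 - X ^ (j + 1)) = (qPoch j)⁻¹ := by
    rw [qPoch_succ, PowerSeries.mul_inv_rev, mul_assoc, mul_comm ((qPoch j)⁻¹),
      ← mul_assoc, PowerSeries.inv_mul_cancel _
        (by rw [constC_one_sub_X_pow _ (Nat.succ_pos j)]; norm_num), one_mul]
  rw [trm, trm, smul_mul_assoc, mul_assoc, h1, tri_succ, mul_smul_comm, ← neg_smul]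
  congr 1
  · ring
  · rw [pow_add]; ring

lemma coeff_one_sub_X_pow_mul (k N : ℕ) (φ : PowerSeries ℚ) :
    coeff N ((1 - X ^ k) * φ) =
      coeff N φ - (if k ≤ N then coeff (N - k) φ else 0) := by
  rw [sub_mul, one_mul, map_sub]
  congr 1
  rw [mul_comm, coeff_mul_X_pow']

lemma geo_coeff (k N : ℕ) (hk : 0 < k) :
    coeff N ((1 - X ^ k)⁻¹ : PowerSeries ℚ) = if k ∣ N then 1 else 0 := by
  have h : ((1 - X ^ k)⁻¹ : PowerSeries ℚ) =
      PowerSeries.mk fun N => if k ∣ N then (1 : ℚ) else 0 := by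
    rw [PowerSeries.inv_eq_iff_mul_eq_one (by rw [constC_one_sub_X_pow _ hk]; norm_num)]
    ext N
    rw [mul_comm, coeff_one_sub_X_pow_mul, coeff_mk, coeff_mk]
    rcases Nat.eq_zero_or_pos N with rfl | hN
    · simp [hk.ne']
    · rw [PowerSeries.coeff_one, if_neg hN.ne']
      by_cases hd : k ∣ N
      · have hkN : k ≤ N := Nat.le_of_dvd hN hd
        rw [if_pos hd, if_pos hkN, if_pos ((Nat.dvd_sub hd dvd_rfl))]
        ring
      · rw [if_neg hd]
        split_ifs with h1 h2
        · exact absurd ((Nat.sub_add_cancel h1) ▸ Dvd.dvd.add h2 dvd_rfl) hd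
        · ring
        · ring
  rw [h, coeff_mk]

lemma coeff_prod_stab {a b M M' : ℕ} (h1 : b ≤ M) (h2 : M ≤ M') :
    coeff (R := ℚ) b (∏ k ∈ Icc a M', (1 - X ^ k)) = coeff b (∏ k ∈ Icc a M, (1 - X ^ k)) := by
  induction M' , h2 using Nat.le_induction with
  | base => rfl
  | succ M' h2 ih =>
    rcases le_or_gt a (M' + 1) with ha | ha
    · rw [Finset.prod_Icc_succ_top ha, mul_comm, coeff_one_sub_X_pow_mul,
        if_neg (by omega), sub_zero, ih]
    · rw [show Icc a (M' + 1) = ∅ by rw [Finset.Icc_eq_empty_iff]; omega,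
        show Icc a M' = ∅ by rw [Finset.Icc_eq_empty_iff]; omega] at *
      exact ih

lemma coeff_tailProd (n N M : ℕ) (h : N ≤ M) :
    coeff N (tailProd n) = coeff N (∏ k ∈ Icc (n + 1) M, (1 - X ^ k)) := by
  rw [tailProd, coeff_mk, coeff_prod_stab (le_refl N) h]

lemma coeff_mul_congr (φ A B : PowerSeries ℚ) (N : ℕ)
    (h : ∀ b ≤ N, coeff b A = coeff b B) :
    coeff N (φ * A) = coeff N (φ * B) := by
  rw [coeff_mul, coeff_mul]
  refine Finset.sum_congr rfl fun p hp => ?_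
  rw [h p.2 (by have := Finset.HasAntidiagonal.mem_antidiagonal.mp hp; omega)]

lemma tailProd_rec (n : ℕ) : tailProd n = (1 - X ^ (n + 1)) * tailProd (n + 1) := by
  ext N
  set M := max N (n + 1) with hM
  rw [coeff_tailProd n N M (le_max_left _ _)]
  rw [coeff_mul_congr _ _ (∏ k ∈ Icc (n + 2) M, (1 - X ^ k)) N
    (fun b hb => coeff_tailProd (n + 1) b M (le_trans hb (le_max_left _ _)))]
  congr 1
  rw [show Icc (n + 2) M = Ioc (n + 1) M from (Finset.Icc_add_one_left_eq_Ioc _ _),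
    ← Finset.Ioc_insert_left (le_max_right N (n + 1)), Finset.prod_insert (by simp)]

lemma seriesSum_sub (a b : ℕ → PowerSeries ℚ) :
    seriesSum a - seriesSum b = seriesSum (fun j => a j - b j) := by
  ext N
  simp only [seriesSum, map_sub, coeff_mk, Finset.sum_sub_distrib]

lemma seriesSum_mul (φ : PowerSeries ℚ) (a : ℕ → PowerSeries ℚ)
    (h : ∀ j N, N < j → coeff N (a j) = 0) :
    φ * seriesSum a = seriesSum (fun j => φ * a j) := by
  ext N
  rw [coeff_mul]
  simp only [seriesSum, coeff_mk, coeff_mul]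
  rw [Finset.sum_comm]
  refine Finset.sum_congr rfl fun p hp => ?_
  have hp2 : p.2 ≤ N := by have := Finset.HasAntidiagonal.mem_antidiagonal.mp hp; omega
  rw [Finset.mul_sum]
  refine Finset.sum_subset (fun j hj => by
    simp only [Finset.mem_range] at *; omega) ?_
  intro j hj hj2
  simp only [Finset.mem_range] at hj hj2
  rw [h j p.2 (by omega), mul_zero]

lemma seriesSum_telescope (v : ℕ → PowerSeries ℚ) (h : ∀ j N, N < j → coeff N (v j) = 0) :
    seriesSum (fun j => v (j + 1) - v j) = -(v 0) := by
  ext N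
  rw [seriesSum, coeff_mk, map_neg]
  simp only [map_sub]
  rw [Finset.sum_range_sub (fun j => coeff N (v j)), h (N + 1) N (by omega)]
  ring

lemma Rn_rec (n : ℕ) : Rn n = (1 - X ^ (n + 1)) * Rn (n + 1) := by
  set v : ℕ → PowerSeries ℚ := fun j => X ^ ((n + 1) * (j + 1)) * trm j with hv_def
  have hv : ∀ j N, N < j → coeff N (v j) = 0 := by
    intro j N hN
    rw [hv_def]
    simp only
    rw [coeff_X_pow_mul', if_neg]
    have : j + 1 ≤ (n + 1) * (j + 1) := Nat.le_mul_of_pos_left _ (by omega)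
    omega
  have hb : ∀ j N, N < j → coeff N (X ^ ((n + 1) * (j + 1)) * trm (j + 1)) = 0 := by
    intro j N hN
    rw [coeff_X_pow_mul']
    split_ifs with h
    · refine coeff_trm_zero ?_
      have : j + 1 ≤ (n + 1) * (j + 1) := Nat.le_mul_of_pos_left _ (by omega)
      omega
    · rfl
  have key : ∀ j : ℕ, X ^ (n * (j + 1)) * trm (j + 1) -
      (1 - X ^ (n + 1)) * (X ^ ((n + 1) * (j + 1)) * trm (j + 1))
      = v (j + 1) - v j := by
    intro j
    have h1 : v j = -(X ^ (n * (j + 1)) * (trm (j + 1) * (1 - X ^ (j + 1)))) := by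
      rw [trm_succ_mul, hv_def]
      simp only [mul_neg, neg_neg]
      rw [← mul_assoc, ← pow_add]
      congr 2
      ring
    have h2 : (n + 1) * (j + 2) = (n + 1) + (n + 1) * (j + 1) := by ring
    rw [h1, hv_def]
    simp only
    rw [h2, pow_add]
    ring
  have e : seriesSum (fun j => X ^ (n * (j + 1)) * trm (j + 1)) -
      seriesSum (fun j => (1 - X ^ (n + 1)) * (X ^ ((n + 1) * (j + 1)) * trm (j + 1)))
      = -(X ^ (n + 1)) := by
    rw [seriesSum_sub,
      show (fun j => X ^ (n * (j + 1)) * trm (j + 1) -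
        (1 - X ^ (n + 1)) * (X ^ ((n + 1) * (j + 1)) * trm (j + 1)))
        = fun j => v (j + 1) - v j from funext key,
      seriesSum_telescope v hv, hv_def]
    simp [trm_zero]
  rw [Rn, Rn, mul_add, mul_one, seriesSum_mul _ _ hb]
  linear_combination e

lemma coeff_Rn_base {N n : ℕ} (h : N ≤ n) :
    coeff N (Rn n) = if N = 0 then 1 else 0 := by
  rw [Rn, map_add, seriesSum, coeff_mk, PowerSeries.coeff_one]
  rw [Finset.sum_eq_zero, add_zero]
  intro j _
  rw [coeff_X_pow_mul']
  split_ifs with hle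
  · refine coeff_trm_zero ?_
    have h1 : n * (j + 1) = n * j + n := by ring
    omega
  · rfl

lemma coeff_tailProd_base {N n : ℕ} (h : N ≤ n) :
    coeff N (tailProd n) = if N = 0 then 1 else 0 := by
  rw [tailProd, coeff_mk, show Icc (n + 1) N = ∅ by rw [Finset.Icc_eq_empty_iff]; omega,
    Finset.prod_empty, PowerSeries.coeff_one]

lemma Rn_eq_tailProd : ∀ N n : ℕ, coeff N (Rn n) = coeff N (tailProd n) := by
  intro N
  induction N using Nat.strong_induction_on with
  | _ N ihN =>
    suffices h : ∀ m n, N ≤ n + m → coeff N (Rn n) = coeff N (tailProd n) by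
      intro n; exact h N n (by omega)
    intro m
    induction m with
    | zero => intro n hn; rw [coeff_Rn_base (by omega), coeff_tailProd_base (by omega)]
    | succ m ihm =>
      intro n hn
      rcases le_or_gt N (n + m) with h' | h'
      · exact ihm n h'
      · rw [Rn_rec n, tailProd_rec n, coeff_one_sub_X_pow_mul, coeff_one_sub_X_pow_mul,
          ihm (n + 1) (by omega)]
        congr 1
        split_ifs with hle
        · exact ihN (N - (n + 1)) (by omega) (n + 1)
        · rfl

lemma tailProd_eq_Rn (n : ℕ) : tailProd n = Rn n := by
  ext N; exact (Rn_eq_tailProd N n).symm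


/-- Σ_{n≥1} (−1)ⁿ q^{n(n+1)/2}/((q;q)_n(1−qⁿ)) = Σ_{n≥0} ((q^{n+1};q)_∞ − 1). -/
theorem stmt16 :
    seriesSum (fun n => ((-1 : ℚ) ^ (n + 1)) •
        (X ^ ((n + 1) * (n + 2) / 2) * ((qPoch (n + 1))⁻¹ * (1 - X ^ (n + 1))⁻¹))) =
      seriesSum (fun n => tailProd n - 1) := by
  have hRHS : (fun n => tailProd n - 1)
      = fun n => seriesSum (fun j => X ^ (n * (j + 1)) * trm (j + 1)) := by
    funext n
    rw [tailProd_eq_Rn, Rn, add_sub_cancel_left]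
  rw [hRHS]
  ext N
  simp only [seriesSum, coeff_mk]
  have hL : ∀ n, coeff N (((-1 : ℚ) ^ (n + 1)) •
      (X ^ ((n + 1) * (n + 2) / 2) * ((qPoch (n + 1))⁻¹ * (1 - X ^ (n + 1))⁻¹)))
      = ∑ m ∈ range (N + 1),
          (if (n + 1) * m ≤ N then coeff (N - (n + 1) * m) (trm (n + 1)) else 0) := by
    intro n
    have hterm : ((-1 : ℚ) ^ (n + 1)) •
        (X ^ ((n + 1) * (n + 2) / 2) * ((qPoch (n + 1))⁻¹ * (1 - X ^ (n + 1))⁻¹))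
        = trm (n + 1) * (1 - X ^ (n + 1))⁻¹ := by
      rw [trm, smul_mul_assoc, mul_assoc]
    rw [hterm, coeff_mul, Finset.Nat.sum_antidiagonal_eq_sum_range_succ
      (fun a b => coeff a (trm (n + 1)) * coeff b ((1 - X ^ (n + 1))⁻¹))]
    simp only [geo_coeff (n + 1) _ (Nat.succ_pos n), mul_ite, mul_one, mul_zero]
    rw [← Finset.sum_filter, ← Finset.sum_filter]
    refine Finset.sum_nbij' (i := fun k => (N - k) / (n + 1))
      (j := fun m => N - (n + 1) * m) ?_ ?_ ?_ ?_ ?_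
    · intro k hk
      simp only [Finset.mem_filter, Finset.mem_range] at hk ⊢
      obtain ⟨hk1, hk2⟩ := hk
      have h1 : (n + 1) * ((N - k) / (n + 1)) = N - k := Nat.mul_div_cancel' hk2
      have h2 : (N - k) / (n + 1) ≤ N - k := Nat.div_le_self _ _
      omega
    · intro m hm
      simp only [Finset.mem_filter, Finset.mem_range] at hm ⊢
      refine ⟨by omega, ?_⟩
      have : N - (N - (n + 1) * m) = (n + 1) * m := by omega
      rw [this]
      exact Dvd.intro m rfl
    · intro k hk
      simp only [Finset.mem_filter, Finset.mem_range] at hk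
      obtain ⟨hk1, hk2⟩ := hk
      have h1 : (n + 1) * ((N - k) / (n + 1)) = N - k := Nat.mul_div_cancel' hk2
      show N - (n + 1) * ((N - k) / (n + 1)) = k
      omega
    · intro m hm
      simp only [Finset.mem_filter, Finset.mem_range] at hm
      obtain ⟨hm1, hm2⟩ := hm
      have h1 : N - (N - (n + 1) * m) = (n + 1) * m := by omega
      show (N - (N - (n + 1) * m)) / (n + 1) = m
      rw [h1, Nat.mul_div_cancel_left _ (Nat.succ_pos n)]
    · intro k hk
      simp only [Finset.mem_filter, Finset.mem_range] at hk
      obtain ⟨hk1, hk2⟩ := hk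
      have h1 : (n + 1) * ((N - k) / (n + 1)) = N - k := Nat.mul_div_cancel' hk2
      show coeff k (trm (n + 1))
          = coeff (N - (n + 1) * ((N - k) / (n + 1))) (trm (n + 1))
      have h2 : N - (n + 1) * ((N - k) / (n + 1)) = k := by omega
      rw [h2]
  simp only [hL]
  simp only [coeff_X_pow_mul']
  rw [Finset.sum_comm]
  refine Finset.sum_congr rfl fun j _ => Finset.sum_congr rfl fun m _ => ?_
  rw [mul_comm (m + 1) j]
end
end
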